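/- In a quantitative reachability game, if a play ρ from v₀ is Val-consistent (i.e., for every player i and index k with ρₖ ∈ V_i and i not having visited F_i in ρ₀…ρₖ, Cost_i(ρ_{≥k}) ≤ Val_i(ρₖ)), then there exists a Nash equilibrium σ from v₀ with outcome ρ. -/

import Mathlib

open scoped Classical

structure Arena (V : Type) where
  E : V → V → Prop
  succ : ∀ v, ∃ w, E v w

variable {V P : Type}

/-- An infinite play: consecutive vertices are connected by edges. -/
def IsPlay (A : Arena V) (ρ : ℕ → V) : Prop := ∀ k, A.E (ρ k) (ρ (k + 1))

/-- Cost: least index of a visit to `F`, or `⊤` if never visited. -/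
noncomputable def cost (F : Set V) (ρ : ℕ → V) : ℕ∞ :=
  ⨅ (k : ℕ) (_ : ρ k ∈ F), (k : ℕ∞)

/-- Qualitative gain: `1` if the play visits `F`, else `0`. -/
noncomputable def gain (F : Set V) (ρ : ℕ → V) : ℕ :=
  if ∃ n, ρ n ∈ F then 1 else 0

/-- The set of players whose target set is visited along the play. -/
def visit (F : P → Set V) (ρ : ℕ → V) : Set P := {i | ∃ n, ρ n ∈ F i}

/-- The set of players whose target set is visited within the prefix `ρ₀…ρₖ`. -/
def visitPrefix (F : P → Set V) (ρ : ℕ → V) (k : ℕ) : Set P := {i | ∃ n ≤ k, ρ n ∈ F i}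

/-- A multiplayer reachability game: an arena, an owner for each vertex,
and a target set for each player. -/
structure Game (P V : Type) extends Arena V where
  owner : V → P
  F : P → Set V

/-- A strategy maps (past history, current vertex) to the next vertex. -/
abbrev Strat (V : Type) := List V → V → V

def IsStrategy (A : Arena V) (s : Strat V) : Prop := ∀ p v, A.E v (s p v)

noncomputable def histStep (G : Game P V) (σ : P → Strat V) :
    List V × V → List V × V :=
  fun x => (x.1 ++ [x.2], σ (G.owner x.2) x.1 x.2)

/-- The unique play from `v0` consistent with the strategy profile `σ`. -/
noncomputable def outcome (G : Game P V) (σ : P → Strat V) (v0 : V) (k : ℕ) : V :=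
  ((histStep G σ)^[k] ([], v0)).2

/-- Replace the strategy of player `i` by `s` in the profile `σ`. -/
noncomputable def updProfile (σ : P → Strat V) (i : P) (s : Strat V) : P → Strat V :=
  fun j => if j = i then s else σ j

/-- Nash equilibrium for the quantitative (cost-minimizing) semantics. -/
def IsNE (G : Game P V) (σ : P → Strat V) (v0 : V) : Prop :=
  (∀ i, IsStrategy G.toArena (σ i)) ∧
  ∀ (i : P) (s : Strat V), IsStrategy G.toArena s →
    cost (G.F i) (outcome G σ v0) ≤ cost (G.F i) (outcome G (updProfile σ i s) v0)

/-- Nash equilibrium for the qualitative (gain-maximizing) semantics. -/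
def IsNEqual (G : Game P V) (σ : P → Strat V) (v0 : V) : Prop :=
  (∀ i, IsStrategy G.toArena (σ i)) ∧
  ∀ (i : P) (s : Strat V), IsStrategy G.toArena s →
    gain (G.F i) (outcome G (updProfile σ i s) v0) ≤ gain (G.F i) (outcome G σ v0)

/-- The profile in which player `i` plays `s` and all other players (the
coalition `-i`) jointly play `t`. -/
noncomputable def coalProfile (i : P) (s t : Strat V) : P → Strat V :=
  fun j => if j = i then s else t

/-- Value of the coalitional zero-sum game `G_i` from `v`: player `i`
minimizes the first hitting time of `F i` against the coalition. -/
noncomputable def val (G : Game P V) (i : P) (v : V) : ℕ∞ :=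
  ⨅ s : {s : Strat V // IsStrategy G.toArena s},
    ⨆ t : {t : Strat V // IsStrategy G.toArena t},
      cost (G.F i) (outcome G (coalProfile i s.1 t.1) v)

/-- A positional (memoryless) strategy only depends on the current vertex. -/
def Positional (s : Strat V) : Prop := ∀ p q v, s p v = s q v

/-- An optimal strategy for the minimizer (player `i`) in `G_i`. -/
def OptimalMin (G : Game P V) (i : P) (s : Strat V) : Prop :=
  IsStrategy G.toArena s ∧
  ∀ (v : V) (t : Strat V), IsStrategy G.toArena t →
    cost (G.F i) (outcome G (coalProfile i s t) v) ≤ val G i v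

/-- An optimal strategy for the maximizer (the coalition `-i`) in `G_i`. -/
def OptimalMax (G : Game P V) (i : P) (t : Strat V) : Prop :=
  IsStrategy G.toArena t ∧
  ∀ (v : V) (s : Strat V), IsStrategy G.toArena s →
    val G i v ≤ cost (G.F i) (outcome G (coalProfile i s t) v)

/-- `λ`-consistency of a play. -/
def lambdaConsistent (G : Game P V) (lam : V → ℕ∞) (ρ : ℕ → V) : Prop :=
  ∀ (i : P) (k : ℕ), G.owner (ρ k) = i → (∀ n ≤ k, ρ n ∉ G.F i) →
    cost (G.F i) (fun j => ρ (k + j)) ≤ lam (ρ k)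

/-- A lasso `hℓ^ω` of length `|hℓ| ≤ L`. -/
def IsLasso (ρ : ℕ → V) (L : ℕ) : Prop :=
  ∃ n p, 0 < p ∧ n + p ≤ L ∧ ∀ k, n ≤ k → ρ (k + p) = ρ k

/-- The play obtained by removing the cycle `ρₖ…ρₖ₊ₗ` from `ρ`. -/
def removeCycle (ρ : ℕ → V) (k l : ℕ) : ℕ → V :=
  fun j => if j ≤ k then ρ j else ρ (j + l)

/-- `ρₖ…ρₖ₊ₗ` is an unnecessary cycle: it is a (nontrivial) cycle inside of
which no new player visits his target set. -/
def UnnecessaryCycle (F : P → Set V) (ρ : ℕ → V) (k l : ℕ) : Prop :=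
  0 < l ∧ ρ k = ρ (k + l) ∧ visitPrefix F ρ k = visitPrefix F ρ (k + l)

/-- The set of cost profiles of plays from `v0`. -/
def costProfiles (G : Game P V) (v0 : V) : Set (P → ℕ∞) :=
  {c | ∃ ρ, IsPlay G.toArena ρ ∧ ρ 0 = v0 ∧ c = fun i => cost (G.F i) ρ}

/-- The set of gain profiles of plays from `v0`. -/
def gainProfiles (G : Game P V) (v0 : V) : Set (P → ℕ) :=
  {c | ∃ ρ, IsPlay G.toArena ρ ∧ ρ 0 = v0 ∧ c = fun i => gain (G.F i) ρ}

/-- Pareto optimality for cost profiles: minimal in the componentwise order. -/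
def ParetoMinimal {α : Type} [Preorder α] (S : Set α) (p : α) : Prop :=
  p ∈ S ∧ ∀ q ∈ S, q ≤ p → q = p

/-- Pareto optimality for gain profiles: maximal in the componentwise order. -/
def ParetoMaximal {α : Type} [Preorder α] (S : Set α) (p : α) : Prop :=
  p ∈ S ∧ ∀ q ∈ S, p ≤ q → q = p

/-- `h ++ [v]` is a history from `v0`: a finite path starting at `v0`
whose current (last) vertex is `v`; `h` is the strict past. -/
def IsHist (A : Arena V) (v0 : V) (h : List V) (v : V) : Prop :=
  (h ++ [v]).head? = some v0 ∧ List.Chain' A.E (h ++ [v])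

/-- The strategy `s` shifted by the past history `h` (i.e. `s|h`). -/
noncomputable def shiftStrat (s : Strat V) (h : List V) : Strat V :=
  fun p v => s (h ++ p) v

/-- Gain of a play `ρ` in the subgame after past history `h`:
`1` iff `h·ρ` visits `F`. -/
noncomputable def gainAfter (F : Set V) (h : List V) (ρ : ℕ → V) : ℕ :=
  if (∃ x ∈ h, x ∈ F) ∨ (∃ n, ρ n ∈ F) then 1 else 0

/-- Subgame perfect equilibrium for qualitative reachability games:
in every subgame after a history from `v0`, no player can strictly
increase his gain by a unilateral deviation. -/
def IsSPEqual (G : Game P V) (σ : P → Strat V) (v0 : V) : Prop :=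
  (∀ i, IsStrategy G.toArena (σ i)) ∧
  ∀ (h : List V) (v : V), IsHist G.toArena v0 h v →
    ∀ (i : P) (s : Strat V), IsStrategy G.toArena s →
      gainAfter (G.F i) h
          (outcome G (updProfile (fun j => shiftStrat (σ j) h) i s) v) ≤
        gainAfter (G.F i) h (outcome G (fun j => shiftStrat (σ j) h) v)

/- ===================== auxiliary lemmas ===================== -/

lemma cost_le_of_mem (F : Set V) (ρ : ℕ → V) (m : ℕ) (h : ρ m ∈ F) :
    cost F ρ ≤ (m : ℕ∞) := iInf₂_le m h

lemma le_cost (F : Set V) (ρ : ℕ → V) (c : ℕ∞) (h : ∀ m, ρ m ∈ F → c ≤ (m : ℕ∞)) :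
    c ≤ cost F ρ := le_iInf₂ h

lemma cost_eq_top (F : Set V) (ρ : ℕ → V) (h : ∀ n, ρ n ∉ F) : cost F ρ = ⊤ := by
  simp [cost, h]

lemma cost_shift_le (F : Set V) (ρ : ℕ → V) (k : ℕ) :
    cost F ρ ≤ (k : ℕ∞) + cost F (fun j => ρ (k + j)) := by
  by_cases h : ∃ j, ρ (k + j) ∈ F
  · have hshift : cost F (fun j => ρ (k + j)) = (Nat.find h : ℕ∞) := by
      refine le_antisymm (cost_le_of_mem _ _ _ (Nat.find_spec h)) ?_
      exact le_cost _ _ _ (fun m hm => by exact_mod_cast Nat.find_min' h hm)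
    rw [hshift]
    refine le_trans (cost_le_of_mem F ρ (k + Nat.find h) (Nat.find_spec h)) ?_
    push_cast; rfl
  · push_neg at h
    rw [cost_eq_top F _ h, add_top]
    exact le_top

lemma shiftStrat_isStrategy (A : Arena V) (s : Strat V) (hs : IsStrategy A s) (h : List V) :
    IsStrategy A (shiftStrat s h) := fun p v => hs (h ++ p) v

lemma outcome_pair (G : Game P V) (τ : P → Strat V) (v0 : V) (k : ℕ) :
    (histStep G τ)^[k] ([], v0)
      = ((List.range k).map (outcome G τ v0), outcome G τ v0 k) := by
  induction k with
  | zero => simp [outcome]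
  | succ k ih =>
    have h2 : outcome G τ v0 (k + 1)
        = τ (G.owner (outcome G τ v0 k)) ((List.range k).map (outcome G τ v0))
            (outcome G τ v0 k) := by
      unfold outcome
      rw [Function.iterate_succ_apply', ih]
      rfl
    rw [Function.iterate_succ_apply', ih, h2]
    simp [histStep, List.range_succ]

lemma outcome_succ (G : Game P V) (τ : P → Strat V) (v0 : V) (k : ℕ) :
    outcome G τ v0 (k + 1)
      = τ (G.owner (outcome G τ v0 k)) ((List.range k).map (outcome G τ v0))
          (outcome G τ v0 k) := by
  unfold outcome
  rw [Function.iterate_succ_apply', outcome_pair]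
  rfl

lemma outcome_zero (G : Game P V) (τ : P → Strat V) (v0 : V) :
    outcome G τ v0 0 = v0 := rfl

/-- If `τ'` agrees with `τ` after shifting by the history of length `n`
(along the realized play), then the outcome of `τ'` from the `n`-th vertex
is the tail of the outcome of `τ`. -/
lemma outcome_tail (G : Game P V) (τ τ' : P → Strat V) (v0 : V) (n : ℕ)
    (h : ∀ j m, τ' j ((List.range m).map (outcome G τ' (outcome G τ v0 n)))
          (outcome G τ' (outcome G τ v0 n) m)
        = τ j ((List.range n).map (outcome G τ v0)
            ++ (List.range m).map (outcome G τ' (outcome G τ v0 n)))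
          (outcome G τ' (outcome G τ v0 n) m)) :
    ∀ m, outcome G τ' (outcome G τ v0 n) m = outcome G τ v0 (n + m) := by
  intro m
  induction m using Nat.strong_induction_on with
  | _ m ih =>
    match m with
    | 0 => rfl
    | (m + 1) =>
      have hl : (List.range m).map (outcome G τ' (outcome G τ v0 n))
          = (List.range m).map (fun j => outcome G τ v0 (n + j)) :=
        List.map_congr_left (fun j hj => ih j (Nat.lt_succ_of_lt (List.mem_range.mp hj)))
      have hcur := ih m (Nat.lt_succ_self m)
      rw [outcome_succ, h, hl, hcur]
      have hL : (List.range n).map (outcome G τ v0)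
            ++ (List.range m).map (fun j => outcome G τ v0 (n + j))
          = (List.range (n + m)).map (outcome G τ v0) := by
        rw [List.range_add, List.map_append, List.map_map]
        rfl
      rw [hL, show n + (m + 1) = (n + m) + 1 from rfl, outcome_succ]

/-- Step inequality for the value: if player `i` owns `v` and `v → w`,
then `val i v ≤ 1 + val i w`. -/
lemma val_step (G : Game P V) (i : P) (s0 : Strat V) (hpos : Positional s0)
    (hopt : OptimalMin G i s0) (v w : V) (hown : G.owner v = i) (hE : G.E v w) :
    val G i v ≤ 1 + val G i w := by
  classical
  set s' : Strat V := fun p u => if p = [] ∧ u = v then w else s0 p u with hs'def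
  have hs' : IsStrategy G.toArena s' := by
    intro p u
    by_cases hc : p = [] ∧ u = v
    · simp only [hs'def, if_pos hc]; rw [hc.2]; exact hE
    · simp only [hs'def, if_neg hc]; exact hopt.1 p u
  refine le_trans (iInf_le _ ⟨s', hs'⟩) (iSup_le ?_)
  rintro ⟨t, ht⟩
  set τ : P → Strat V := coalProfile i s' t with hτdef
  set τ' : P → Strat V := coalProfile i s0 (shiftStrat t [v]) with hτ'def
  have h1 : outcome G τ v 1 = w := by
    rw [outcome_succ]
    simp only [List.range_zero, List.map_nil, outcome_zero, hτdef, coalProfile, hown,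
      if_pos rfl, hs'def]
    simp
  have hτ'i : ∀ p u, τ' i p u = s0 p u := fun p u => by simp [hτ'def, coalProfile]
  have hτi : ∀ p u, τ i p u = s' p u := fun p u => by simp [hτdef, coalProfile]
  have hτ'j : ∀ j, j ≠ i → ∀ p u, τ' j p u = shiftStrat t [v] p u :=
    fun j hj p u => by simp [hτ'def, coalProfile, hj]
  have hτj : ∀ j, j ≠ i → ∀ p u, τ j p u = t p u :=
    fun j hj p u => by simp [hτdef, coalProfile, hj]
  have htail : ∀ m, outcome G τ' (outcome G τ v 1) m = outcome G τ v (1 + m) := by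
    apply outcome_tail
    intro j m
    simp only [show List.range 1 = [0] by rfl, List.map_cons, List.map_nil, outcome_zero]
    by_cases hj : j = i
    · rw [hj, hτ'i, hτi, hs'def]
      beta_reduce
      have hne : ¬(([v] ++ (List.range m).map (outcome G τ' (outcome G τ v 1))) = []
          ∧ outcome G τ' (outcome G τ v 1) m = v) := by
        rintro ⟨hc, -⟩
        simp at hc
      rw [if_neg hne]
      exact hpos _ _ _
    · rw [hτ'j j hj, hτj j hj]
      rfl
  have hcost : cost (G.F i) (outcome G τ' w) ≤ val G i w :=
    hopt.2 w (shiftStrat t [v]) (shiftStrat_isStrategy _ t ht [v])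
  calc cost (G.F i) (outcome G τ v)
      ≤ (1 : ℕ∞) + cost (G.F i) (fun j => outcome G τ v (1 + j)) := by
        exact_mod_cast cost_shift_le (G.F i) (outcome G τ v) 1
    _ ≤ 1 + val G i w := by
        refine add_le_add_right ?_ 1
        refine le_trans (le_of_eq ?_) hcost
        congr 1
        funext m
        rw [← htail m, h1]

/-- Whether a finite list matches the prefix of `ρ`. -/
def MatchesP (ρ : ℕ → V) (l : List V) : Prop :=
  ∀ m, m < l.length → l[m]? = some (ρ m)

lemma matches_range_map (ρ : ℕ → V) (k : ℕ) :
    MatchesP ρ ((List.range k).map ρ ++ [ρ k]) := by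
  intro m hm
  have : (List.range k).map ρ ++ [ρ k] = (List.range (k + 1)).map ρ := by
    rw [List.range_succ]; simp
  rw [this] at hm ⊢
  simp only [List.length_map, List.length_range] at hm
  rw [List.getElem?_map, List.getElem?_range hm]
  rfl

/-- The index of the last vertex on `ρ` before a deviation. -/
noncomputable def devI (ρ : ℕ → V) (l : List V) : ℕ :=
  sInf {m | l[m + 1]? ≠ some (ρ (m + 1))}

/-- every Val-consistent play from `v0` is the outcome of a
Nash equilibrium from `v0`. -/
theorem stmt6 {V P : Type} [Fintype V] [Fintype P] (G : Game P V) (v0 : V)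
    (hdet : ∀ i : P, (∃ s, Positional s ∧ OptimalMin G i s) ∧
      (∃ t, Positional t ∧ OptimalMax G i t))
    (ρ : ℕ → V) (hρ : IsPlay G.toArena ρ) (h0 : ρ 0 = v0)
    (hcons : lambdaConsistent G (fun v => val G (G.owner v) v) ρ) :
    ∃ σ : P → Strat V, IsNE G σ v0 ∧ outcome G σ v0 = ρ := by
  classical
  have hd1 := fun i => (hdet i).1
  have hd2 := fun i => (hdet i).2
  choose smin hminpos hminopt using hd1
  choose tmax hmaxpos hmaxopt using hd2
  set σ : P → Strat V := fun _ p v =>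
    if MatchesP ρ (p ++ [v]) then ρ (p.length + 1)
    else tmax (G.owner (ρ (devI ρ (p ++ [v])))) [] v with hσdef
  have hσval : ∀ j p v, σ j p v = if MatchesP ρ (p ++ [v]) then ρ (p.length + 1)
      else tmax (G.owner (ρ (devI ρ (p ++ [v])))) [] v := fun j p v => rfl
  have hσstrat : ∀ j, IsStrategy G.toArena (σ j) := by
    intro j p v
    rw [hσval j p v]
    by_cases hm : MatchesP ρ (p ++ [v])
    · rw [if_pos hm]
      have hv : v = ρ p.length := by
        have h := hm p.length (by simp)
        rw [List.getElem?_concat_length] at h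
        exact Option.some.inj h
      rw [hv]
      exact hρ p.length
    · rw [if_neg hm]
      exact (hmaxopt _).1 [] v
  have hout : ∀ k, (histStep G σ)^[k] ([], v0) = ((List.range k).map ρ, ρ k) := by
    intro k
    induction k with
    | zero => simp [← h0]
    | succ k ih =>
      rw [Function.iterate_succ_apply', ih]
      have hfst : (List.range k).map ρ ++ [ρ k] = (List.range (k + 1)).map ρ := by
        rw [List.range_succ]; simp
      have hsnd : σ (G.owner (ρ k)) ((List.range k).map ρ) (ρ k) = ρ (k + 1) := by
        rw [hσval (G.owner (ρ k)) _ _, if_pos (matches_range_map ρ k)]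
        simp
      simp only [histStep, hfst, hsnd]
  have houtρ : outcome G σ v0 = ρ := by
    funext k
    unfold outcome
    rw [hout k]
  refine ⟨σ, ⟨hσstrat, ?_⟩, houtρ⟩
  intro i s hs
  rw [houtρ]
  set τ : P → Strat V := updProfile σ i s with hτdef
  set π : ℕ → V := outcome G τ v0 with hπdef
  have hτval : ∀ j, j ≠ i → τ j = σ j := by
    intro j hj
    rw [hτdef]; unfold updProfile; rw [if_neg hj]
  have hτi : τ i = s := by
    rw [hτdef]; unfold updProfile; rw [if_pos rfl]
  have hτstrat : ∀ j, IsStrategy G.toArena (τ j) := by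
    intro j
    by_cases hj : j = i
    · rw [hj, hτi]; exact hs
    · rw [hτval j hj]; exact hσstrat j
  by_cases hall : ∀ k, π k = ρ k
  · rw [funext hall]
  · have hex : ∃ k, π k ≠ ρ k := not_forall.mp hall
    have hK'spec : π (Nat.find hex) ≠ ρ (Nat.find hex) := Nat.find_spec hex
    have hK'min : ∀ m, m < Nat.find hex → π m = ρ m :=
      fun m hm => not_not.mp (Nat.find_min hex hm)
    have hπ0 : π 0 = ρ 0 := by
      show outcome G τ v0 0 = ρ 0
      rw [outcome_zero, h0]
    have hK'pos : 0 < Nat.find hex := by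
      rcases Nat.eq_zero_or_pos (Nat.find hex) with h | h
      · exact absurd (h ▸ hπ0) hK'spec
      · exact h
    obtain ⟨K, hK⟩ : ∃ K, Nat.find hex = K + 1 :=
      ⟨Nat.find hex - 1, (Nat.succ_pred_eq_of_pos hK'pos).symm⟩
    have hKlt : ∀ m, m ≤ K → π m = ρ m := fun m hm => hK'min m (by omega)
    have hKne : π (K + 1) ≠ ρ (K + 1) := hK ▸ hK'spec
    have hlist : (List.range K).map π = (List.range K).map ρ :=
      List.map_congr_left (fun m hm => hKlt m (le_of_lt (List.mem_range.mp hm)))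
    have hown : G.owner (ρ K) = i := by
      by_contra hni
      apply hKne
      have h1 := outcome_succ G τ v0 K
      rw [show outcome G τ v0 = π from rfl] at h1
      rw [hKlt K le_rfl, hlist] at h1
      rw [h1, hτval _ hni, hσval (G.owner (ρ K)) _ _, if_pos (matches_range_map ρ K)]
      simp
    have hEdge : G.E (ρ K) (π (K + 1)) := by
      have h1 := outcome_succ G τ v0 K
      rw [show outcome G τ v0 = π from rfl] at h1
      rw [hKlt K le_rfl] at h1
      rw [h1]
      exact hτstrat _ _ _
    -- the punishing coalition takes over after the deviation
    set H : List V := (List.range (K + 1)).map (outcome G τ v0) with hHdef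
    have hHlen : H.length = K + 1 := by simp [hHdef]
    set s' : Strat V := shiftStrat s H with hs'def
    set τ' : P → Strat V := coalProfile i s' (tmax i) with hτ'def
    have hKne' : outcome G τ v0 (K + 1) ≠ ρ (K + 1) := hKne
    have htail0 : ∀ m, outcome G τ' (outcome G τ v0 (K + 1)) m
        = outcome G τ v0 ((K + 1) + m) := by
      apply outcome_tail
      intro j m
      set f : ℕ → V := outcome G τ' (outcome G τ v0 (K + 1)) with hfdef
      by_cases hj : j = i
      · rw [hj]
        have l1 : τ' i = s' := by
          rw [hτ'def]; unfold coalProfile; rw [if_pos rfl]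
        rw [l1, hτi, hs'def]
        rfl
      · set l : List V := (H ++ (List.range m).map f) ++ [f m] with hldef
        have hlassoc : l = H ++ ((List.range m).map f ++ [f m]) := by
          rw [hldef, List.append_assoc]
        have hllen : l.length = (K + 1) + m + 1 := by
          simp [hldef, hHlen]; omega
        have hfirst : ((List.range m).map f ++ [f m])[0]? = some (f 0) := by
          cases m with
          | zero => simp
          | succ m =>
            rw [List.getElem?_append_left (by simp)]
            simp
        have hlK1 : l[K + 1]? = some (outcome G τ v0 (K + 1)) := by
          rw [hlassoc, List.getElem?_append_right hHlen.le, hHlen]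
          rw [Nat.sub_self, hfirst]
          rfl
        have hnm : ¬ MatchesP ρ l := by
          intro hM
          have h1 := hM (K + 1) (by omega)
          rw [hlK1] at h1
          exact hKne' (Option.some.inj h1)
        have hdev : devI ρ l = K := by
          have hmem : K ∈ {n | l[n + 1]? ≠ some (ρ (n + 1))} := by
            simp only [Set.mem_setOf_eq, hlK1]
            exact fun hc => hKne' (Option.some.inj hc)
          refine le_antisymm (Nat.sInf_le hmem) (le_csInf ⟨K, hmem⟩ ?_)
          intro n hn
          by_contra hlt
          push_neg at hlt
          apply hn
          rw [hlassoc, List.getElem?_append_left (by omega), hHdef, List.getElem?_map,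
            List.getElem?_range (by omega)]
          simp only [Option.map_some]
          have : outcome G τ v0 (n + 1) = ρ (n + 1) := hKlt (n + 1) (by omega)
          rw [this]
        rw [hτ'def]
        show (coalProfile i s' (tmax i)) j _ _ = τ j _ _
        unfold coalProfile
        rw [if_neg hj, hτval j hj, hσval j _ _]
        rw [show (H ++ (List.range m).map f) ++ [f m] = l from rfl]
        rw [if_neg hnm, hdev, hown]
        exact hmaxpos i _ [] _
    have hvalw : val G i (π (K + 1)) ≤ cost (G.F i) (fun m => π ((K + 1) + m)) := by
      have h1 := (hmaxopt i).2 (outcome G τ v0 (K + 1)) s'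
        (shiftStrat_isStrategy _ s hs H)
      refine le_trans h1 (le_of_eq ?_)
      congr 1
      funext m
      exact htail0 m
    have hvstep : val G i (ρ K) ≤ 1 + val G i (π (K + 1)) :=
      val_step G i (smin i) (hminpos i) (hminopt i) (ρ K) (π (K + 1)) hown hEdge
    refine le_cost _ _ _ ?_
    intro m hm
    rcases le_or_gt m K with hmK | hmK
    · have hρm : ρ m ∈ G.F i := by rw [← hKlt m hmK]; exact hm
      exact cost_le_of_mem _ _ m hρm
    · by_cases hvis : ∃ n ≤ K, ρ n ∈ G.F i
      · obtain ⟨n, hn, hnF⟩ := hvis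
        exact le_trans (cost_le_of_mem _ _ n hnF) (Nat.cast_le.mpr (by omega))
      · push_neg at hvis
        have hcons' := hcons i K hown hvis
        beta_reduce at hcons'
        rw [hown] at hcons'
        have htailcost : cost (G.F i) (fun m' => π ((K + 1) + m'))
            ≤ ((m - (K + 1) : ℕ) : ℕ∞) := by
          refine cost_le_of_mem _ _ (m - (K + 1)) ?_
          show π ((K + 1) + (m - (K + 1))) ∈ G.F i
          rw [show (K + 1) + (m - (K + 1)) = m by omega]
          exact hm
        calc cost (G.F i) ρ
            ≤ (K : ℕ∞) + cost (G.F i) (fun j => ρ (K + j)) := cost_shift_le _ _ K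
          _ ≤ (K : ℕ∞) + val G i (ρ K) := add_le_add_right hcons' _
          _ ≤ (K : ℕ∞) + (1 + val G i (π (K + 1))) := add_le_add_right hvstep _
          _ ≤ (K : ℕ∞) + (1 + cost (G.F i) (fun m' => π ((K + 1) + m'))) :=
              add_le_add_right (add_le_add_right hvalw _) _
          _ ≤ (K : ℕ∞) + (1 + ((m - (K + 1) : ℕ) : ℕ∞)) :=
              add_le_add_right (add_le_add_right htailcost _) _
          _ = ((K + (1 + (m - (K + 1))) : ℕ) : ℕ∞) := by push_cast; ring
          _ = (m : ℕ∞) := by congr 1; omega
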